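/- Let X be a closed linear subspace of a complex Banach space Y and let λ, β ≥ 1. Assume: (a) there exists a bounded linear operator Q : X** → X with ‖Q‖ ≤ β and Q(ι_X x) = x for all x ∈ X; (b) for every finite-dimensional subspace F of X and every finite-dimensional subspace G of Y with F ⊆ G, there exists a linear map T : G → X with ‖T‖ ≤ λ and Tf = f for all f ∈ F. Then there exists a bounded linear projection P : Y → Y with range X, Px = x for all x ∈ X, and ‖P‖ ≤ λβ. -/

import Mathlib

open NormedSpace Filter Topology

namespace NormedSpace

/-- The topological dual `E →L[𝕜] 𝕜`, as `NormedSpace.Dual` was defined in the older Mathlib. -/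
def Dual (𝕜 : Type*) [NontriviallyNormedField 𝕜] (E : Type*) [SeminormedAddCommGroup E]
    [NormedSpace 𝕜 E] : Type _ :=
  E →L[𝕜] 𝕜

noncomputable instance Dual.instSeminormedAddCommGroup (𝕜 : Type*) [NontriviallyNormedField 𝕜]
    (E : Type*) [SeminormedAddCommGroup E] [NormedSpace 𝕜 E] :
    SeminormedAddCommGroup (Dual 𝕜 E) :=
  ContinuousLinearMap.toSeminormedAddCommGroup

noncomputable instance Dual.instNormedSpace (𝕜 : Type*) [NontriviallyNormedField 𝕜]
    (E : Type*) [SeminormedAddCommGroup E] [NormedSpace 𝕜 E] :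
    NormedSpace 𝕜 (Dual 𝕜 E) :=
  ContinuousLinearMap.toNormedSpace

end NormedSpace

noncomputable instance NormedSpace.Dual.stmt18FunLike (𝕜 : Type*) [NontriviallyNormedField 𝕜]
    (E : Type*) [SeminormedAddCommGroup E] [NormedSpace 𝕜 E] :
    FunLike (NormedSpace.Dual 𝕜 E) E 𝕜 :=
  ContinuousLinearMap.funLike

instance NormedSpace.Dual.stmt18CLMClass (𝕜 : Type*) [NontriviallyNormedField 𝕜]
    (E : Type*) [SeminormedAddCommGroup E] [NormedSpace 𝕜 E] :
    ContinuousLinearMapClass (NormedSpace.Dual 𝕜 E) 𝕜 E 𝕜 :=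
  ContinuousLinearMap.continuousSemilinearMapClass

@[ext]
theorem NormedSpace.Dual.stmt18_ext {𝕜 : Type*} [NontriviallyNormedField 𝕜]
    {E : Type*} [SeminormedAddCommGroup E] [NormedSpace 𝕜 E] {φ ψ : NormedSpace.Dual 𝕜 E}
    (h : ∀ x, φ x = ψ x) : φ = ψ :=
  ContinuousLinearMap.ext h

@[simp]
theorem NormedSpace.Dual.stmt18_add_apply {𝕜 : Type*} [NontriviallyNormedField 𝕜]
    {E : Type*} [SeminormedAddCommGroup E] [NormedSpace 𝕜 E] (φ ψ : NormedSpace.Dual 𝕜 E)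
    (x : E) : (φ + ψ) x = φ x + ψ x :=
  rfl

@[simp]
theorem NormedSpace.Dual.stmt18_smul_apply {𝕜 : Type*} [NontriviallyNormedField 𝕜]
    {E : Type*} [SeminormedAddCommGroup E] [NormedSpace 𝕜 E] (c : 𝕜) (φ : NormedSpace.Dual 𝕜 E)
    (x : E) : (c • φ) x = c • φ x :=
  rfl

section Aux
variable (Y : Type*) [NormedAddCommGroup Y] [NormedSpace ℂ Y]

/-- Directed set of finite-dimensional subspaces of `Y`. -/
def Stmt18D := {G : Subspace ℂ Y // FiniteDimensional ℂ G}

noncomputable instance : SemilatticeSup (Stmt18D Y) :=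
  Subtype.semilatticeSup fun G H hG hH => by
    haveI := hG; haveI := hH; exact Submodule.finiteDimensional_sup G H

instance : Nonempty (Stmt18D Y) := ⟨⟨⊥, inferInstance⟩⟩

/-- An ultrafilter refining the section filter on finite-dimensional subspaces. -/
noncomputable def Stmt18U : Ultrafilter (Stmt18D Y) := Ultrafilter.of atTop

lemma Stmt18U_le : (Stmt18U Y : Filter (Stmt18D Y)) ≤ atTop := Ultrafilter.of_le _

lemma Stmt18_eventually_mem (y : Y) :
    ∀ᶠ G : Stmt18D Y in Stmt18U Y, y ∈ G.1 := by
  have h : ∀ᶠ G : Stmt18D Y in atTop, y ∈ G.1 := by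
    refine (eventually_ge_atTop (⟨Submodule.span ℂ {y}, inferInstance⟩ : Stmt18D Y)).mono ?_
    intro G hG
    exact hG (Submodule.mem_span_singleton_self y)
  exact h.filter_mono (Stmt18U_le Y)

end Aux

/-- Let `X` be a closed subspace of a complex Banach space `Y`, `λ, β ≥ 1`.  Assume
(a) there is `Q : X** → X` with `‖Q‖ ≤ β` and `Q ∘ ι_X = id`, and (b) for all
finite-dimensional subspaces `F ⊆ X` and `G ⊆ Y` with `F ⊆ G` there is a linear map
`T : G → X` with `‖T‖ ≤ λ` fixing `F` pointwise.  Then there is a bounded linear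
projection `P : Y → Y` with range `X` and `‖P‖ ≤ λβ`. -/
theorem stmt18 {Y : Type*} [NormedAddCommGroup Y] [NormedSpace ℂ Y] [CompleteSpace Y]
    (X : Subspace ℂ Y) (hX : IsClosed (X : Set Y))
    (lam β : ℝ) (hlam : 1 ≤ lam) (hβ : 1 ≤ β)
    (Q : Dual ℂ (Dual ℂ X) →L[ℂ] X) (hQn : ‖Q‖ ≤ β)
    (hQ : ∀ x : X, Q (inclusionInDoubleDual ℂ X x) = x)
    (hext : ∀ F G : Subspace ℂ Y, FiniteDimensional ℂ F → FiniteDimensional ℂ G →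
      F ≤ X → F ≤ G →
      ∃ T : G →L[ℂ] X, ‖T‖ ≤ lam ∧
        ∀ (f : Y) (hfF : f ∈ F) (hfG : f ∈ G), ((T ⟨f, hfG⟩ : X) : Y) = f) :
    ∃ P : Y →L[ℂ] Y, (∀ y : Y, P y ∈ X) ∧ (∀ x ∈ X, P x = x) ∧ ‖P‖ ≤ lam * β := by
  classical
  have hlam0 : (0:ℝ) < lam := lt_of_lt_of_le one_pos hlam
  -- choose local extension operators
  have hch : ∀ G : Stmt18D Y, ∃ T : G.1 →L[ℂ] X, ‖T‖ ≤ lam ∧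
      ∀ (f : Y) (hfF : f ∈ G.1 ⊓ X) (hfG : f ∈ G.1), ((T ⟨f, hfG⟩ : X) : Y) = f := by
    intro G
    haveI := G.2
    haveI : FiniteDimensional ℂ (G.1 ⊓ X : Subspace ℂ Y) :=
      Submodule.finiteDimensional_of_le (inf_le_left : G.1 ⊓ X ≤ G.1)
    exact hext (G.1 ⊓ X) G.1 inferInstance inferInstance inf_le_right inf_le_left
  choose T hTn hTfix using hch
  set U : Ultrafilter (Stmt18D Y) := Stmt18U Y with hU
  -- the approximating maps
  set g : Stmt18D Y → Y → X := fun G y => if h : y ∈ G.1 then T G ⟨y, h⟩ else 0 with hg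
  have hgb : ∀ G y, ‖g G y‖ ≤ lam * ‖y‖ := by
    intro G y
    by_cases h : y ∈ G.1
    · simp only [hg, dif_pos h]
      calc ‖T G ⟨y, h⟩‖ ≤ ‖T G‖ * ‖(⟨y, h⟩ : G.1)‖ := (T G).le_opNorm _
        _ ≤ lam * ‖y‖ := by
            have : ‖(⟨y, h⟩ : G.1)‖ = ‖y‖ := rfl
            rw [this]
            exact mul_le_mul_of_nonneg_right (hTn G) (norm_nonneg y)
    · simp only [hg, dif_neg h, norm_zero]
      positivity
  -- eventual additivity / homogeneity
  have hmem := Stmt18_eventually_mem Y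
  have hgadd : ∀ y z : Y, ∀ᶠ G : Stmt18D Y in U, g G (y + z) = g G y + g G z := by
    intro y z
    filter_upwards [hmem y, hmem z] with G hy hz
    have hyz : y + z ∈ G.1 := G.1.add_mem hy hz
    simp only [hg, dif_pos hy, dif_pos hz, dif_pos hyz]
    rw [← map_add]
    congr 1
  have hgsmul : ∀ (c : ℂ) (y : Y), ∀ᶠ G : Stmt18D Y in U, g G (c • y) = c • g G y := by
    intro c y
    filter_upwards [hmem y] with G hy
    have hcy : c • y ∈ G.1 := G.1.smul_mem c hy
    simp only [hg, dif_pos hy, dif_pos hcy]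
    rw [← map_smul]
    congr 1
  -- existence of limits
  have hlim : ∀ (y : Y) (φ : Dual ℂ X), ∃ c : ℂ,
      Tendsto (fun G => φ (g G y)) (U : Filter (Stmt18D Y)) (𝓝 c) := by
    intro y φ
    have hK : IsCompact (Metric.closedBall (0:ℂ) (‖φ‖ * (lam * ‖y‖))) :=
      isCompact_closedBall _ _
    have hUle : (U.map fun G => φ (g G y) : Filter ℂ) ≤
        Filter.principal (Metric.closedBall (0:ℂ) (‖φ‖ * (lam * ‖y‖))) := by
      rw [le_principal_iff]
      refine Filter.mem_map.2 (Filter.univ_mem' fun G => mem_closedBall_zero_iff.mpr ?_)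
      calc ‖φ (g G y)‖ ≤ ‖φ‖ * ‖g G y‖ := φ.le_opNorm _
        _ ≤ ‖φ‖ * (lam * ‖y‖) := mul_le_mul_of_nonneg_left (hgb G y) (norm_nonneg φ)
    obtain ⟨c, _, hc⟩ := hK.ultrafilter_le_nhds (U.map fun G => φ (g G y)) hUle
    exact ⟨c, hc⟩
  set s : Y → Dual ℂ X → ℂ := fun y φ => limUnder (U : Filter (Stmt18D Y)) (fun G => φ (g G y))
    with hs
  have hconv : ∀ (y : Y) (φ : Dual ℂ X),
      Tendsto (fun G => φ (g G y)) (U : Filter (Stmt18D Y)) (𝓝 (s y φ)) := by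
    intro y φ
    exact tendsto_nhds_limUnder (hlim y φ)
  have hsb : ∀ y φ, ‖s y φ‖ ≤ lam * ‖y‖ * ‖φ‖ := by
    intro y φ
    refine le_of_tendsto (hconv y φ).norm (Filter.Eventually.of_forall fun G => ?_)
    calc ‖φ (g G y)‖ ≤ ‖φ‖ * ‖g G y‖ := φ.le_opNorm _
      _ ≤ ‖φ‖ * (lam * ‖y‖) := mul_le_mul_of_nonneg_left (hgb G y) (norm_nonneg φ)
      _ = lam * ‖y‖ * ‖φ‖ := by ring
  -- S y as an element of the bidual
  set Sy : Y → Dual ℂ (Dual ℂ X) := fun y =>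
    LinearMap.mkContinuous
      { toFun := s y
        map_add' := fun φ ψ => tendsto_nhds_unique (hconv y (φ + ψ))
          (((hconv y φ).add (hconv y ψ)).congr (fun G => by
            simp [ContinuousLinearMap.add_apply]))
        map_smul' := fun c φ => tendsto_nhds_unique (hconv y (c • φ))
          (((hconv y φ).const_smul c).congr (fun G => by
            simp [ContinuousLinearMap.smul_apply])) }
      (lam * ‖y‖) (fun φ => by simpa using hsb y φ) with hSy
  have hSy_apply : ∀ y φ, Sy y φ = s y φ := fun y φ => rfl
  have hSyn : ∀ y, ‖Sy y‖ ≤ lam * ‖y‖ := by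
    intro y
    exact LinearMap.mkContinuous_norm_le _ (by positivity) _
  -- linearity of y ↦ Sy y
  have hSadd : ∀ y z : Y, Sy (y + z) = Sy y + Sy z := by
    intro y z
    ext φ
    have key : s (y + z) φ = s y φ + s z φ := by
      refine tendsto_nhds_unique (hconv (y + z) φ) ?_
      refine ((hconv y φ).add (hconv z φ)).congr' ?_
      filter_upwards [hgadd y z] with G hG
      rw [hG, map_add]
    simpa [hSy_apply, ContinuousLinearMap.add_apply] using key
  have hSsmul : ∀ (c : ℂ) (y : Y), Sy (c • y) = c • Sy y := by
    intro c y
    ext φ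
    have key : s (c • y) φ = c * s y φ := by
      refine tendsto_nhds_unique (hconv (c • y) φ) ?_
      have h2 := (hconv y φ).const_smul c
      simp only [smul_eq_mul] at h2
      refine h2.congr' ?_
      filter_upwards [hgsmul c y] with G hG
      rw [hG, map_smul, smul_eq_mul]
    simpa [hSy_apply, ContinuousLinearMap.smul_apply, smul_eq_mul] using key
  set S : Y →L[ℂ] Dual ℂ (Dual ℂ X) :=
    LinearMap.mkContinuous
      { toFun := Sy, map_add' := hSadd, map_smul' := hSsmul }
      lam (fun y => by simpa [mul_comm] using hSyn y) with hS
  have hS_apply : ∀ y, S y = Sy y := fun y => rfl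
  -- S restricted to X is the canonical embedding
  have hSx : ∀ (x : Y) (hx : x ∈ X), S x = inclusionInDoubleDual ℂ X ⟨x, hx⟩ := by
    intro x hx
    ext φ
    rw [hS_apply, hSy_apply]
    refine tendsto_nhds_unique (hconv x φ) ?_
    have heq : ∀ᶠ G : Stmt18D Y in U, φ (g G x) = φ ⟨x, hx⟩ := by
      filter_upwards [hmem x] with G hxG
      have : g G x = ⟨x, hx⟩ := by
        apply Subtype.ext
        simp only [hg, dif_pos hxG]
        exact hTfix G x (Submodule.mem_inf.2 ⟨hxG, hx⟩) hxG
      rw [this]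
    have : Tendsto (fun _ : Stmt18D Y => φ (⟨x, hx⟩ : X)) (U : Filter (Stmt18D Y))
        (𝓝 (φ ⟨x, hx⟩)) := tendsto_const_nhds
    exact this.congr' (heq.mono fun G h => h.symm)
  -- the projection
  refine ⟨X.subtypeL.comp (Q.comp S), ?_, ?_, ?_⟩
  · intro y
    exact (Q (S y)).2
  · intro x hx
    simp only [ContinuousLinearMap.comp_apply]
    rw [hSx x hx, hQ]
    rfl
  · refine ContinuousLinearMap.opNorm_le_bound _ (by positivity) fun y => ?_
    have h1 : ‖X.subtypeL.comp (Q.comp S) y‖ = ‖Q (S y)‖ := rfl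
    rw [h1]
    calc ‖Q (S y)‖ ≤ ‖Q‖ * ‖S y‖ := Q.le_opNorm _
      _ ≤ β * (lam * ‖y‖) := by
          refine mul_le_mul hQn ?_ (norm_nonneg _) (le_trans zero_le_one hβ)
          rw [hS_apply]; exact hSyn y
      _ = lam * β * ‖y‖ := by ring
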